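/- Let s : ℤ → Σ be a balanced sequence admitting a factorization s = p̃·xy·p with {x, y} = {a, b}. Let n ≥ 1 and let w = s_1 s_2 ⋯ s_{n−1} be the prefix of p of length n − 1. Then s has exactly n + 1 distinct factors of length n; listing them in lexicographic order as u_0 <_lex u_1 <_lex ⋯ <_lex u_n (with a < b): (i) u_0 = a·w and u_n = b·w; (ii) there exists i ∈ {0, …, n−1} such that u_i = w̃·a and u_{i+1} = w̃·b; (iii) for every j ∈ {0, …, n−1} with j ≠ i, there exist prefixes x', y' of w such that u_j = x̃'·ab·y' and u_{j+1} = x̃'·ba·y', where ·̃ denotes word reversal. -/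

import Mathlib

/-- The letter `a` is encoded by `false`, the letter `b` by `true`.
`u` is a factor of the biinfinite sequence `s`. -/
def IsFactor (s : ℤ → Bool) (u : List Bool) : Prop :=
  ∃ k : ℤ, u = (List.range u.length).map fun i => s (k + i)

/-- `s` is balanced: any two factors of the same length have numbers of
occurrences of each letter differing by at most 1. -/
def IsBalanced (s : ℤ → Bool) : Prop :=
  ∀ u v : List Bool, IsFactor s u → IsFactor s v → u.length = v.length →
    ∀ c : Bool, |(u.count c : ℤ) - (v.count c : ℤ)| ≤ 1

/-- A biinfinite sequence `s` admits a factorization `s = p̃·xy·p` with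
`{x, y} = {a, b}` (where `p = s₁s₂s₃⋯`) iff `s (-1) ≠ s 0` and
`s n = s (-n - 1)` for all `n ∈ ℤ ∖ {-1, 0}`. -/
def HasCentralFactorization (s : ℤ → Bool) : Prop :=
  s (-1) ≠ s 0 ∧ ∀ n : ℤ, n ≠ -1 → n ≠ 0 → s n = s (-n - 1)

namespace OFB

def win (s : ℤ → Bool) (k : ℤ) (m : ℕ) : List Bool :=
  (List.range m).map fun i : ℕ => s (k + (i : ℤ))

lemma coe_range_eq (m : ℕ) :
    (do let a ← List.range m; pure ((a : ℕ) : ℤ)) = (List.range m).map (fun a : ℕ => (a : ℤ)) := by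
  induction (List.range m) with
  | nil => rfl
  | cons x xs ih => simpa using ih

lemma repr_eq (s : ℤ → Bool) (k : ℤ) (m : ℕ) :
    (List.map (fun i => s (k + i)) (do let a ← List.range m; pure ((a:ℕ) : ℤ))) = win s k m := by
  rw [coe_range_eq, List.map_map]; rfl

lemma isFactor_iff (s : ℤ → Bool) (u : List Bool) :
    IsFactor s u ↔ ∃ k, u = win s k u.length := by
  unfold IsFactor
  constructor <;> (rintro ⟨k, hk⟩; refine ⟨k, ?_⟩)
  · exact hk.trans (repr_eq s k u.length)
  · exact hk.trans (repr_eq s k u.length).symm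

@[simp] lemma win_length (s : ℤ → Bool) (k : ℤ) (m : ℕ) : (win s k m).length = m := by
  simp only [win, List.length_map, List.length_range]

lemma win_getElem (s : ℤ → Bool) (k : ℤ) (m : ℕ) (i : ℕ) (h : i < m) :
    (win s k m)[i]'(by simpa using h) = s (k + i) := by
  simp only [win, List.getElem_map, List.getElem_range]

lemma win_append (s : ℤ → Bool) (k : ℤ) (m₁ m₂ : ℕ) :
    win s k (m₁ + m₂) = win s k m₁ ++ win s (k + m₁) m₂ := by
  unfold win
  rw [List.range_add, List.map_append, List.map_map]
  congr 1
  apply List.map_congr_left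
  intro i _
  simp only [Function.comp_apply]
  push_cast
  ring_nf

lemma win_one (s : ℤ → Bool) (k : ℤ) : win s k 1 = [s k] := by
  show (List.range 1).map _ = _
  rw [show List.range 1 = [0] from rfl]
  simp only [List.map_cons, List.map_nil, Nat.cast_zero, add_zero]

lemma win_succ (s : ℤ → Bool) (k : ℤ) (m : ℕ) :
    win s k (m + 1) = win s k m ++ [s (k + m)] := by
  rw [win_append s k m 1, win_one]

lemma win_cons (s : ℤ → Bool) (k : ℤ) (m : ℕ) :
    win s k (m + 1) = s k :: win s (k + 1) m := by
  have h := win_append s k 1 m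
  rw [add_comm 1 m] at h
  rw [h, win_one]
  simp only [List.singleton_append, Nat.cast_one]

lemma win_take (s : ℤ → Bool) (k : ℤ) (m t : ℕ) (h : t ≤ m) :
    (win s k m).take t = win s k t := by
  unfold win
  rw [← List.map_take, List.take_range]
  congr 2
  omega

lemma win_drop (s : ℤ → Bool) (k : ℤ) (m t : ℕ) (h : t ≤ m) :
    (win s k m).drop t = win s (k + t) (m - t) := by
  have h2 : t + (m - t) = m := by omega
  have h3 := win_append s k t (m - t)
  rw [h2] at h3
  rw [h3, List.drop_left' (win_length s k t)]

lemma isFactor_win (s : ℤ → Bool) (k : ℤ) (m : ℕ) : IsFactor s (win s k m) := by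
  rw [isFactor_iff]
  exact ⟨k, by rw [win_length]⟩

lemma isFactor_take (s : ℤ → Bool) (u : List Bool) (h : IsFactor s u) (t : ℕ) :
    IsFactor s (u.take t) := by
  rw [isFactor_iff] at h
  rcases h with ⟨k, hk⟩
  rcases le_or_gt t u.length with ht | ht
  · rw [hk, win_take s k u.length t ht]
    exact isFactor_win s k t
  · rw [List.take_of_length_le (le_of_lt ht), isFactor_iff]
    exact ⟨k, hk⟩
lemma isFactor_drop (s : ℤ → Bool) (u : List Bool) (h : IsFactor s u) (t : ℕ) :
    IsFactor s (u.drop t) := by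
  rw [isFactor_iff] at h
  rcases h with ⟨k, hk⟩
  rcases le_or_gt t u.length with ht | ht
  · rw [hk, win_drop s k u.length t ht]
    exact isFactor_win s (k + t) (u.length - t)
  · rw [List.drop_eq_nil_of_le (le_of_lt ht)]
    exact ⟨0, rfl⟩

lemma isFactor_of_prefix {s : ℤ → Bool} {u f : List Bool} (h : IsFactor s f)
    (hp : u <+: f) : IsFactor s u := by
  rw [List.prefix_iff_eq_take] at hp
  rw [hp]; exact isFactor_take s f h _

lemma isFactor_of_suffix {s : ℤ → Bool} {u f : List Bool} (h : IsFactor s f)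
    (hp : u <:+ f) : IsFactor s u := by
  rw [List.suffix_iff_eq_drop] at hp
  rw [hp]; exact isFactor_drop s f h _

lemma isFactor_of_infix {s : ℤ → Bool} {u f : List Bool} (h : IsFactor s f)
    (hp : u <:+: f) : IsFactor s u := by
  rcases hp with ⟨a, b, rfl⟩
  exact isFactor_of_prefix (isFactor_of_suffix h ⟨a, by simp [List.append_assoc]⟩)
    ⟨b, rfl⟩

lemma isFactor_extR {s : ℤ → Bool} {u : List Bool} (h : IsFactor s u) :
    ∃ c, IsFactor s (u ++ [c]) := by
  rw [isFactor_iff] at h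
  rcases h with ⟨k, hk⟩
  refine ⟨s (k + u.length), ?_⟩
  rw [hk]
  have : win s k u.length ++ [s (k + ↑(win s k u.length).length)]
      = win s k (u.length + 1) := by rw [win_length, ← win_succ]
  rw [this]
  exact isFactor_win s k (u.length + 1)

lemma isFactor_extL {s : ℤ → Bool} {u : List Bool} (h : IsFactor s u) :
    ∃ c, IsFactor s (c :: u) := by
  rw [isFactor_iff] at h
  rcases h with ⟨k, hk⟩
  refine ⟨s (k - 1), ?_⟩
  rw [hk]
  have h2 := win_cons s (k - 1) u.length
  rw [sub_add_cancel] at h2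
  rw [← h2]
  exact isFactor_win s (k - 1) (u.length + 1)

lemma first_diff (u : List Bool) : ∀ (v : List Bool), u.length = v.length → u ≠ v →
    ∃ (z u' v' : List Bool) (a : Bool),
      u = z ++ a :: u' ∧ v = z ++ (!a) :: v' ∧ u'.length = v'.length := by
  induction u with
  | nil =>
    intro v hl hne
    cases v with
    | nil => exact absurd rfl hne
    | cons y v => simp at hl
  | cons x u ih =>
    intro v hl hne
    cases v with
    | nil => simp at hl
    | cons y v =>
      by_cases hxy : x = y
      · subst hxy
        have huv : u ≠ v := fun h => hne (by rw [h])
        obtain ⟨z, u', v', a, h1, h2, h3⟩ := ih v (by simpa using hl) huv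
        exact ⟨x :: z, u', v', a, by rw [h1]; rfl, by rw [h2]; rfl, h3⟩
      · refine ⟨[], u, v, x, rfl, ?_, by simpa using hl⟩
        have : y = !x := by cases x <;> cases y <;> simp_all
        rw [this]; rfl

lemma balance_contra {s : ℤ → Bool} (hs : IsBalanced s) (z : List Bool)
    (h0 : IsFactor s (false :: (z ++ [false]))) (h1 : IsFactor s (true :: (z ++ [true]))) :
    False := by
  have h := hs _ _ h0 h1 (by simp) true
  have c0 : (false :: (z ++ [false])).count true = z.count true := by
    simp [List.count_cons, List.count_append]
  have c1 : (true :: (z ++ [true])).count true = z.count true + 2 := by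
    simp [List.count_cons, List.count_append]
  rw [c0, c1] at h
  rw [abs_le] at h
  push_cast at h
  omega

lemma RS_unique {s : ℤ → Bool} (hs : IsBalanced s) {u v : List Bool}
    (hl : u.length = v.length)
    (hu0 : IsFactor s (u ++ [false])) (hu1 : IsFactor s (u ++ [true]))
    (hv0 : IsFactor s (v ++ [false])) (hv1 : IsFactor s (v ++ [true])) : u = v := by
  by_contra hne'
  have hrl : u.reverse.length = v.reverse.length := by simpa using hl
  have hner : u.reverse ≠ v.reverse := fun h => hne' (by
    have := congrArg List.reverse h; simpa using this)
  obtain ⟨z, u', v', a, h1, h2, h3⟩ := first_diff u.reverse v.reverse hrl hner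
  have hu : u = u'.reverse ++ (a :: z.reverse) := by
    have := congrArg List.reverse h1
    simpa [List.reverse_append] using this
  have hv : v = v'.reverse ++ ((!a) :: z.reverse) := by
    have := congrArg List.reverse h2
    simpa [List.reverse_append] using this
  have fu : IsFactor s (a :: (z.reverse ++ [a])) := by
    refine isFactor_of_suffix (if ha : a = true then (ha ▸ hu1) else ?_) ⟨u'.reverse, ?_⟩
    · have ha' : a = false := by simpa using ha
      exact ha' ▸ hu0
    · rw [hu]; simp
  have fv : IsFactor s ((!a) :: (z.reverse ++ [!a])) := by
    refine isFactor_of_suffix (if ha : (!a) = true then (ha ▸ hv1) else ?_) ⟨v'.reverse, ?_⟩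
    · have ha' : (!a) = false := by simpa using ha
      exact ha' ▸ hv0
    · rw [hv]; simp
  cases a with
  | false => exact balance_contra hs z.reverse fu (by simpa using fv)
  | true => exact balance_contra hs z.reverse (by simpa using fv) fu

lemma LS_unique {s : ℤ → Bool} (hs : IsBalanced s) {u v : List Bool}
    (hl : u.length = v.length)
    (hu0 : IsFactor s (false :: u)) (hu1 : IsFactor s (true :: u))
    (hv0 : IsFactor s (false :: v)) (hv1 : IsFactor s (true :: v)) : u = v := by
  by_contra hne'
  obtain ⟨z, u', v', a, h1, h2, h3⟩ := first_diff u v hl hne'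
  have fu : IsFactor s (a :: (z ++ [a])) := by
    refine isFactor_of_prefix (if ha : a = true then (ha ▸ hu1) else ?_) ⟨u', ?_⟩
    · have ha' : a = false := by simpa using ha
      exact ha' ▸ hu0
    · rw [h1]; simp
  have fv : IsFactor s ((!a) :: (z ++ [!a])) := by
    refine isFactor_of_prefix (if ha : (!a) = true then (ha ▸ hv1) else ?_) ⟨v', ?_⟩
    · have ha' : (!a) = false := by simpa using ha
      exact ha' ▸ hv0
    · rw [h2]; simp
  cases a with
  | false => exact balance_contra hs z fu (by simpa using fv)
  | true => exact balance_contra hs z (by simpa using fv) fu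

/-- central window: the factor occupying positions `-j, …, -j+m-1`. -/
def Cw (s : ℤ → Bool) (j m : ℕ) : List Bool := win s (-(j : ℤ)) m

/-- prefix of the right half: positions `1, …, m`. -/
def Wp (s : ℤ → Bool) (m : ℕ) : List Bool := win s 1 m

variable {s : ℤ → Bool}

lemma rev_W (hmir : ∀ k : ℤ, k ≠ -1 → k ≠ 0 → s k = s (-k - 1)) (m : ℕ) :
    (Wp s m).reverse = win s (-(m : ℤ) - 1) m := by
  apply List.ext_getElem (by simp [Wp, win])
  intro i h1 h2
  have hi : i < m := by simpa [win] using h2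
  simp only [List.getElem_reverse, Wp, win, List.getElem_map, List.getElem_range,
    List.length_map, List.length_range]
  have e3 : (1 : ℤ) + ((m - 1 - i : ℕ) : ℤ) = (m : ℤ) - i := by omega
  rw [e3, hmir ((m : ℤ) - i) (by omega) (by omega)]
  congr 1
  ring

lemma Cw_getElem (j m i : ℕ) (h : i < m) :
    (Cw s j m)[i]'(by simpa [Cw] using h) = s (-(j : ℤ) + i) := win_getElem s _ m i h

lemma Cw_ne (hne : s (-1) ≠ s 0) (hmir : ∀ k : ℤ, k ≠ -1 → k ≠ 0 → s k = s (-k - 1)) :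
    ∀ m i j : ℕ, i < j → j ≤ m → Cw s i m ≠ Cw s j m := by
  intro m
  induction m with
  | zero => intro i j h1 h2; omega
  | succ m ih =>
    intro i j h1 h2 heq
    rcases Nat.lt_or_ge j (m + 1) with hj | hj
    · -- j ≤ m : compare prefixes of length m
      have ht : (Cw s i (m + 1)).take m = (Cw s j (m + 1)).take m := by rw [heq]
      rw [Cw, Cw, win_take s _ _ m (by omega), win_take s _ _ m (by omega)] at ht
      exact ih i j h1 (by omega) ht
    · have hj1 : j = m + 1 := by omega
      subst hj1
      rcases Nat.eq_zero_or_pos i with hi0 | hip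
      · -- i = 0, j = m+1 : periodicity contradiction
        subst hi0
        have key : ∀ t : ℕ, t < m + 1 → s t = s (-((m + 1 : ℕ) : ℤ) + t) := by
          intro t ht
          have e1 := Cw_getElem (s := s) 0 (m + 1) t ht
          have e2 := Cw_getElem (s := s) (m + 1) (m + 1) t ht
          rw [List.getElem_of_eq heq] at e1
          rw [e2] at e1
          norm_num at e1
          rw [e1.symm]
          congr 1
          push_cast
          ring
        rcases Nat.eq_zero_or_pos m with hm0 | hmp
        · subst hm0
          have := key 0 (by omega)
          norm_num at this
          exact hne this.symm
        · have k1 : s 0 = s (-((m + 1 : ℕ) : ℤ)) := by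
            have := key 0 (by omega); simpa using this
          have k2 : s ((m : ℕ) : ℤ) = s (-((m + 1 : ℕ) : ℤ)) := by
            have := hmir ((m : ℕ) : ℤ) (by omega) (by omega)
            rw [this]; congr 1; omega
          have k3 : s ((m : ℕ) : ℤ) = s (-1) := by
            have := key m (by omega)
            rw [this]; congr 1; omega
          rw [← k2, k3] at k1
          exact hne k1.symm
      · -- 1 ≤ i < j = m+1 : compare suffixes (drop 1)
        have ht : (Cw s i (m + 1)).drop 1 = (Cw s (m + 1) (m + 1)).drop 1 := by rw [heq]
        rw [Cw, Cw, win_drop s _ _ 1 (by omega), win_drop s _ _ 1 (by omega)] at ht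
        simp only [Nat.add_sub_cancel] at ht
        have e1 : -((i : ℕ) : ℤ) + ((1 : ℕ) : ℤ) = -(((i - 1 : ℕ) : ℕ) : ℤ) := by
          push_cast
          omega
        have e2 : -(((m + 1 : ℕ) : ℕ) : ℤ) + ((1 : ℕ) : ℤ) = -((m : ℕ) : ℤ) := by
          push_cast
          omega
        rw [e1, e2] at ht
        exact ih (i - 1) m (by omega) (by omega) ht

lemma bool_cover {x a b : Bool} (h : a ≠ b) : x = a ∨ x = b := by
  cases x <;> cases a <;> cases b <;> simp_all

lemma rs_of_two {s : ℤ → Bool} {g : List Bool} {c d : Bool} (hcd : c ≠ d)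
    (h1 : IsFactor s (g ++ [c])) (h2 : IsFactor s (g ++ [d])) :
    IsFactor s (g ++ [false]) ∧ IsFactor s (g ++ [true]) := by
  cases c <;> cases d <;> simp_all

lemma ls_of_two {s : ℤ → Bool} {g : List Bool} {c d : Bool} (hcd : c ≠ d)
    (h1 : IsFactor s (c :: g)) (h2 : IsFactor s (d :: g)) :
    IsFactor s (false :: g) ∧ IsFactor s (true :: g) := by
  cases c <;> cases d <;> simp_all

lemma Cw_succ (j m : ℕ) : Cw s j (m + 1) = Cw s j m ++ [s (-(j : ℤ) + m)] := by
  rw [Cw, Cw, win_succ]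

lemma factor_eq_Cw (hs : IsBalanced s) (hne : s (-1) ≠ s 0)
    (hmir : ∀ k : ℤ, k ≠ -1 → k ≠ 0 → s k = s (-k - 1)) :
    ∀ m u, u.length = m → IsFactor s u → ∃ j, j ≤ m ∧ u = Cw s j m := by
  intro m
  induction m with
  | zero =>
    intro u hlen _
    refine ⟨0, le_refl 0, ?_⟩
    rw [List.length_eq_zero_iff] at hlen
    rw [hlen]; rfl
  | succ m ih =>
    intro u hlen hu
    rw [isFactor_iff] at hu
    obtain ⟨k, hk⟩ := hu
    rw [hlen] at hk
    have hsplit : u = win s k m ++ [s (k + m)] := by rw [hk, win_succ]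
    obtain ⟨q, hq, hgq⟩ := ih (win s k m) (win_length s k m) (isFactor_win s k m)
    -- the left-edge window of length m and its two extensions
    set ρ : List Bool := win s (-((m + 1 : ℕ) : ℤ)) m with hρdef
    obtain ⟨q₀, hq₀, hρ⟩ := ih ρ (win_length _ _ _) (isFactor_win _ _ _)
    have hext1 : Cw s (m + 1) (m + 1) = ρ ++ [s (-1)] := by
      have e : (-((m + 1 : ℕ) : ℤ) + m) = -1 := by omega
      rw [Cw, win_succ, ← e]
    have hext0 : Cw s q₀ (m + 1) = ρ ++ [s (-(q₀ : ℤ) + m)] := by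
      rw [Cw_succ, ← hρ]
    have hdiff : s (-1) ≠ s (-(q₀ : ℤ) + m) := by
      intro h
      apply Cw_ne hne hmir (m + 1) q₀ (m + 1) (by omega) (le_refl _)
      rw [hext0, hext1, h]
    by_cases hc : s (k + m) = s (-(q : ℤ) + m)
    · exact ⟨q, by omega, by rw [hsplit, hgq, hc, ← Cw_succ]⟩
    · -- win s k m is right special, hence equals ρ
      have hfu : IsFactor s (win s k m ++ [s (k + m)]) := by
        rw [← win_succ]; exact isFactor_win s k (m + 1)
      have hfq : IsFactor s (win s k m ++ [s (-(q : ℤ) + m)]) := by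
        have := isFactor_win s (-(q : ℤ)) (m + 1)
        rw [show win s (-(q : ℤ)) (m + 1) = Cw s q (m + 1) from rfl, Cw_succ, ← hgq] at this
        exact this
      have hfρ1 : IsFactor s (ρ ++ [s (-1)]) := by
        have := isFactor_win s (-((m + 1 : ℕ) : ℤ)) (m + 1)
        rw [show win s (-((m + 1 : ℕ) : ℤ)) (m + 1) = Cw s (m + 1) (m + 1) from rfl, hext1] at this
        exact this
      have hfρ0 : IsFactor s (ρ ++ [s (-(q₀ : ℤ) + m)]) := by
        have := isFactor_win s (-(q₀ : ℤ)) (m + 1)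
        rw [show win s (-(q₀ : ℤ)) (m + 1) = Cw s q₀ (m + 1) from rfl, hext0] at this
        exact this
      obtain ⟨hg0, hg1⟩ := rs_of_two hc hfu hfq
      obtain ⟨hr0, hr1⟩ := rs_of_two hdiff hfρ1 hfρ0
      have hgρ : win s k m = ρ := RS_unique hs (by simp [hρdef]) hg0 hg1 hr0 hr1
      rcases bool_cover (x := s (k + m)) hdiff with h | h
      · refine ⟨m + 1, le_refl _, ?_⟩
        rw [hsplit, hgρ, h, hext1]
      · refine ⟨q₀, by omega, ?_⟩
        rw [hsplit, hgρ, h, hext0]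

lemma rev_w_ext (hs : IsBalanced s) (hne : s (-1) ≠ s 0)
    (hmir : ∀ k : ℤ, k ≠ -1 → k ≠ 0 → s k = s (-k - 1)) (m : ℕ) (c : Bool) :
    IsFactor s ((Wp s m).reverse ++ [c]) := by
  have hρ : (Wp s m).reverse = win s (-((m + 1 : ℕ) : ℤ)) m := by
    rw [rev_W hmir m]
    congr 1
    omega
  obtain ⟨q₀, hq₀, hq⟩ := factor_eq_Cw hs hne hmir m ((Wp s m).reverse)
    (by simp [Wp, win]) (by rw [hρ]; exact isFactor_win _ _ _)
  have hext1 : Cw s (m + 1) (m + 1) = (Wp s m).reverse ++ [s (-1)] := by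
    have e : (-((m + 1 : ℕ) : ℤ) + m) = -1 := by omega
    rw [Cw, win_succ, ← e, ← hρ]
  have hext0 : Cw s q₀ (m + 1) = (Wp s m).reverse ++ [s (-(q₀ : ℤ) + m)] := by
    rw [Cw_succ, ← hq]
  have hdiff : s (-1) ≠ s (-(q₀ : ℤ) + m) := by
    intro h
    apply Cw_ne hne hmir (m + 1) q₀ (m + 1) (by omega) (le_refl _)
    rw [hext0, hext1, h]
  rcases bool_cover (x := c) hdiff with h | h
  · rw [h, ← hext1]; exact isFactor_win _ _ _
  · rw [h, ← hext0]; exact isFactor_win _ _ _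

lemma w_ext (hs : IsBalanced s) (hne : s (-1) ≠ s 0)
    (hmir : ∀ k : ℤ, k ≠ -1 → k ≠ 0 → s k = s (-k - 1)) (m : ℕ) (c : Bool) :
    IsFactor s (c :: Wp s m) := by
  obtain ⟨q', hq', hW⟩ := factor_eq_Cw hs hne hmir m (Wp s m)
    (by simp [Wp, win]) (isFactor_win s 1 m)
  have h0 : Cw s 0 (m + 1) = s 0 :: Wp s m := by
    have e : -((0 : ℕ) : ℤ) = 0 := by norm_num
    rw [Cw, e, win_cons, zero_add]
    rfl
  have h1 : Cw s (q' + 1) (m + 1) = s (-((q' + 1 : ℕ) : ℤ)) :: Wp s m := by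
    rw [Cw, win_cons]
    congr 1
    rw [hW, Cw]
    congr 1
    omega
  have hdiff : s 0 ≠ s (-((q' + 1 : ℕ) : ℤ)) := by
    intro h
    apply Cw_ne hne hmir (m + 1) 0 (q' + 1) (by omega) (by omega)
    rw [h0, h1, h]
  rcases bool_cover (x := c) hdiff with h | h
  · rw [h, ← h0]; exact isFactor_win _ _ _
  · rw [h, ← h1]; exact isFactor_win _ _ _

lemma rs_eq_revW (hs : IsBalanced s) (hne : s (-1) ≠ s 0)
    (hmir : ∀ k : ℤ, k ≠ -1 → k ≠ 0 → s k = s (-k - 1)) {g : List Bool}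
    (h0 : IsFactor s (g ++ [false])) (h1 : IsFactor s (g ++ [true])) :
    g = (Wp s g.length).reverse :=
  RS_unique hs (by simp [Wp, win]) h0 h1
    (rev_w_ext hs hne hmir g.length false) (rev_w_ext hs hne hmir g.length true)

lemma ls_eq_W (hs : IsBalanced s) (hne : s (-1) ≠ s 0)
    (hmir : ∀ k : ℤ, k ≠ -1 → k ≠ 0 → s k = s (-k - 1)) {g : List Bool}
    (h0 : IsFactor s (false :: g)) (h1 : IsFactor s (true :: g)) :
    g = Wp s g.length :=
  LS_unique hs (by simp [Wp, win]) h0 h1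
    (w_ext hs hne hmir g.length false) (w_ext hs hne hmir g.length true)

lemma reverse_isFactor (hs : IsBalanced s) (hne : s (-1) ≠ s 0)
    (hmir : ∀ k : ℤ, k ≠ -1 → k ≠ 0 → s k = s (-k - 1)) :
    ∀ u : List Bool, IsFactor s u → IsFactor s u.reverse := by
  suffices H : ∀ m u, u.length = m → IsFactor s u → IsFactor s u.reverse by
    intro u hu; exact H u.length u rfl hu
  intro m
  induction m with
  | zero =>
    intro u hlen hu
    rw [List.length_eq_zero_iff] at hlen
    subst hlen; exact hu
  | succ m ih =>
    rcases Nat.eq_zero_or_pos m with hm0 | hmp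
    · subst hm0
      intro u hlen hu
      cases u with
      | nil => simp at hlen
      | cons x t =>
        cases t with
        | nil => simpa using hu
        | cons a b => simp at hlen
    · have step : ∀ (x y : Bool) (mid : List Bool), mid.length = m - 1 →
          IsFactor s (x :: (mid ++ [y])) → ¬ IsFactor s (y :: (mid.reverse ++ [x])) →
          IsFactor s ((!y) :: (mid.reverse ++ [x])) ∧ ¬ IsFactor s (x :: (mid ++ [!y])) := by
        intro x y mid hmid hf hnr
        have hg : IsFactor s (x :: mid) := isFactor_of_prefix hf ⟨[y], by simp⟩
        have hq : IsFactor s (mid.reverse ++ [x]) := by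
          have h2 := ih (x :: mid) (by simp; omega) hg
          simpa using h2
        obtain ⟨d, hd⟩ := isFactor_extL hq
        have hdy : d = !y := by
          rcases bool_cover (x := d) (a := y) (b := !y) (by simp) with h | h
          · exact absurd (h ▸ hd) hnr
          · exact h
        refine ⟨hdy ▸ hd, ?_⟩
        intro hr
        have hfy : IsFactor s ((x :: mid) ++ [y]) := by simpa using hf
        have hfy' : IsFactor s ((x :: mid) ++ [!y]) := by simpa using hr
        obtain ⟨h0, h1⟩ := rs_of_two (c := y) (d := !y) (by simp) hfy hfy'
        have hxm : x :: mid = (Wp s (x :: mid).length).reverse := rs_eq_revW hs hne hmir h0 h1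
        have hqW : mid.reverse ++ [x] = Wp s (x :: mid).length := by
          have h3 := congrArg List.reverse hxm
          simpa using h3
        apply hnr
        rw [hqW]
        exact w_ext hs hne hmir _ y
      have ends : ∀ (x y : Bool) (mid : List Bool), mid.length = m - 1 →
          IsFactor s (x :: (mid ++ [y])) → ¬ IsFactor s (y :: (mid.reverse ++ [x])) → x ≠ y := by
        intro x y mid hmid hf hnr
        obtain ⟨hA1, hA1r⟩ := step x y mid hmid hf hnr
        have hnr2 : ¬ IsFactor s (x :: (mid.reverse.reverse ++ [!y])) := by
          simpa using hA1r
        obtain ⟨hA2, _⟩ := step (!y) x mid.reverse (by simp [hmid]) hA1 hnr2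
        have hA2' : IsFactor s ((!x) :: (mid ++ [!y])) := by simpa using hA2
        intro hxy
        have hb := hs _ _ hf hA2' (by simp) true
        rw [abs_le] at hb
        subst hxy
        cases x with
        | false =>
          simp [List.count_cons, List.count_append] at hb
        | true =>
          simp [List.count_cons, List.count_append] at hb
          omega
      intro u hlen hu
      by_contra hnr
      cases u with
      | nil => simp at hlen
      | cons x t =>
        rcases List.eq_nil_or_concat t with rfl | ⟨mid, y, rfl⟩
        · simp at hlen; omega
        · simp only [List.concat_eq_append] at hlen hu hnr
          have hmid : mid.length = m - 1 := by simp at hlen; omega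
          have hnr' : ¬ IsFactor s (y :: (mid.reverse ++ [x])) := by
            intro h; apply hnr
            have e : (x :: (mid ++ [y])).reverse = y :: (mid.reverse ++ [x]) := by simp
            rw [e]; exact h
          have h1 : x ≠ y := ends x y mid hmid hu hnr'
          obtain ⟨hA1, hA1r⟩ := step x y mid hmid hu hnr'
          have hnr2 : ¬ IsFactor s (x :: (mid.reverse.reverse ++ [!y])) := by
            simpa using hA1r
          have h2 : (!y) ≠ x := ends (!y) x mid.reverse (by simp [hmid]) hA1 hnr2
          cases x <;> cases y <;> simp_all

lemma lex_append_cons (z u' v' : List Bool) :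
    List.Lex (· < ·) (z ++ false :: u') (z ++ true :: v') := by
  induction z with
  | nil => exact List.Lex.rel (by decide)
  | cons c z ih => exact List.Lex.cons ih

lemma lex_first : ∀ (z : List Bool) {u' v' : List Bool} {a b : Bool}, a ≠ b →
    List.Lex (· < ·) (z ++ a :: u') (z ++ b :: v') → a = false ∧ b = true := by
  intro z
  induction z with
  | nil =>
    intro u' v' a b hab h
    cases h with
    | cons h' => exact absurd rfl hab
    | rel h' =>
      cases a <;> cases b
      · exact absurd rfl hab
      · exact ⟨rfl, rfl⟩
      · exact absurd h' (by decide)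
      · exact absurd rfl hab
  | cons c z ih =>
    intro u' v' a b hab h
    rw [List.cons_append, List.cons_append] at h
    cases h with
    | cons h' => exact ih hab h'
    | rel h' => exact absurd h' (lt_irrefl c)

lemma lex_mono_append (z : List Bool) {u' v' : List Bool}
    (h : List.Lex (· < ·) u' v') : List.Lex (· < ·) (z ++ u') (z ++ v') := by
  induction z with
  | nil => exact h
  | cons c z ih => exact List.Lex.cons ih

lemma win_cancel (m d : ℕ) (hd : d < m) {v : List Bool}
    (h : Wp s m = win s 1 d ++ v) : v = s (1 + (d : ℤ)) :: win s (1 + (d : ℤ) + 1) (m - d - 1) := by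
  have h2 : Wp s m = win s 1 d ++ win s (1 + (d : ℤ)) (m - d) := by
    rw [Wp, show m = d + (m - d) by omega, win_append]
    congr 3
    omega
  rw [h2] at h
  have h3 := (List.append_cancel_left h).symm
  rw [show m - d = (m - d - 1) + 1 by omega, win_cons] at h3
  exact h3

lemma not_lt_min (hs : IsBalanced s) (hne : s (-1) ≠ s 0)
    (hmir : ∀ k : ℤ, k ≠ -1 → k ≠ 0 → s k = s (-k - 1)) (m : ℕ) (u : List Bool)
    (hlen : u.length = m + 1) (hu : IsFactor s u) :
    ¬ List.Lex (· < ·) u (false :: Wp s m) := by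
  intro hlt
  have hne' : u ≠ false :: Wp s m := by
    rintro rfl
    exact lt_irrefl (α := List Bool) _ hlt
  obtain ⟨z, u', v', a, h1, h2, h3⟩ := first_diff u (false :: Wp s m)
    (by simp [Wp, win, hlen]) hne'
  rw [h1, h2] at hlt
  obtain ⟨ha, -⟩ := lex_first z (a := a) (b := !a) (by cases a <;> simp) hlt
  subst ha
  cases z with
  | nil => simp at h2
  | cons c z₂ =>
    rw [List.cons_append] at h2
    injection h2 with hc ht
    subst hc
    set d := z₂.length with hddef
    have hdm : d < m := by
      have := congrArg List.length ht
      simp [Wp, win] at this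
      omega
    have hz₂ : z₂ = win s 1 d := by
      have : (Wp s m).take d = z₂ := by rw [ht, List.take_left]
      rw [← this, Wp, win_take s 1 m d (by omega)]
    rw [hz₂] at ht
    have hv := win_cancel m d hdm ht
    injection hv with hletter htail
    have hletter' : s (1 + (d : ℤ)) = true := by simpa using hletter.symm
    have hP1 : IsFactor s (false :: (z₂ ++ [false])) := by
      apply isFactor_of_prefix hu
      refine ⟨u', ?_⟩
      rw [h1]
      simp
    have hP2 : IsFactor s (true :: (z₂ ++ [true])) := by
      have hW : Wp s (d + 1) = z₂ ++ [true] := by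
        rw [Wp, win_succ, ← hz₂, hletter']
      rw [← hW]
      exact w_ext hs hne hmir (d + 1) true
    exact balance_contra hs z₂ hP1 hP2

lemma not_max_lt (hs : IsBalanced s) (hne : s (-1) ≠ s 0)
    (hmir : ∀ k : ℤ, k ≠ -1 → k ≠ 0 → s k = s (-k - 1)) (m : ℕ) (u : List Bool)
    (hlen : u.length = m + 1) (hu : IsFactor s u) :
    ¬ List.Lex (· < ·) (true :: Wp s m) u := by
  intro hlt
  have hne' : true :: Wp s m ≠ u := by
    intro hh
    rw [← hh] at hlt
    exact lt_irrefl (α := List Bool) _ hlt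
  obtain ⟨z, v', u', a, h2, h1, h3⟩ := first_diff (true :: Wp s m) u
    (by simp [Wp, win, hlen]) hne'
  rw [h1, h2] at hlt
  obtain ⟨ha, hb⟩ := lex_first z (a := a) (b := !a) (by cases a <;> simp) hlt
  subst ha
  cases z with
  | nil => simp at h2
  | cons c z₂ =>
    rw [List.cons_append] at h2
    injection h2 with hc ht
    subst hc
    set d := z₂.length with hddef
    have hdm : d < m := by
      have := congrArg List.length ht
      simp [Wp, win] at this
      omega
    have hz₂ : z₂ = win s 1 d := by
      have : (Wp s m).take d = z₂ := by rw [ht, List.take_left]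
      rw [← this, Wp, win_take s 1 m d (by omega)]
    rw [hz₂] at ht
    have hv := win_cancel m d hdm ht
    injection hv with hletter htail
    have hletter' : s (1 + (d : ℤ)) = false := hletter.symm
    have hP2 : IsFactor s (true :: (z₂ ++ [true])) := by
      apply isFactor_of_prefix hu
      refine ⟨u', ?_⟩
      rw [h1]
      simp [hb]
    have hP1 : IsFactor s (false :: (z₂ ++ [false])) := by
      have hW : Wp s (d + 1) = z₂ ++ [false] := by
        rw [Wp, win_succ, ← hz₂, hletter']
      rw [← hW]
      exact w_ext hs hne hmir (d + 1) false
    exact balance_contra hs z₂ hP1 hP2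

lemma Cw_middle (hmir : ∀ k : ℤ, k ≠ -1 → k ≠ 0 → s k = s (-k - 1)) (j m : ℕ)
    (hj : 1 ≤ j) (hjm : j + 1 ≤ m) :
    Cw s j m = (Wp s (j - 1)).reverse ++ s (-1) :: s 0 :: Wp s (m - j - 1) := by
  have hA : (Wp s (j - 1)).reverse = win s (-(j : ℤ)) (j - 1) := by
    rw [rev_W hmir]
    congr 1
    omega
  have e1 : (j - 1) + (2 + (m - j - 1)) = m := by omega
  have hsplit : win s (-(j : ℤ)) m
      = win s (-(j : ℤ)) (j - 1) ++ win s (-(j : ℤ) + ((j - 1 : ℕ) : ℤ)) (2 + (m - j - 1)) := by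
    rw [← win_append, e1]
  have e2 : -(j : ℤ) + ((j - 1 : ℕ) : ℤ) = -1 := by omega
  rw [Cw, hsplit, e2, hA]
  congr 1
  rw [show (2 + (m - j - 1)) = ((m - j - 1) + 1) + 1 by omega, win_cons,
    show (-1 : ℤ) + 1 = 0 by norm_num, win_cons, show (0 : ℤ) + 1 = 1 by norm_num]
  rfl

lemma Wp_prefix (t m : ℕ) (h : t ≤ m) : Wp s t <+: Wp s m := by
  rw [Wp, Wp, ← win_take s 1 m t h]
  exact List.take_prefix t _

lemma Wp_length (m : ℕ) : (Wp s m).length = m := win_length s 1 m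

lemma both_middle (hs : IsBalanced s) (hne : s (-1) ≠ s 0)
    (hmir : ∀ k : ℤ, k ≠ -1 → k ≠ 0 → s k = s (-k - 1)) (k n : ℕ) (hkn : k + 2 ≤ n) :
    IsFactor s ((Wp s k).reverse ++ false :: true :: Wp s (n - k - 2)) ∧
    IsFactor s ((Wp s k).reverse ++ true :: false :: Wp s (n - k - 2)) := by
  have h1 : Cw s (k + 1) n = (Wp s k).reverse ++ s (-1) :: s 0 :: Wp s (n - k - 2) := by
    have h := Cw_middle hmir (k + 1) n (by omega) (by omega)
    rw [h, show (k + 1) - 1 = k by omega, show n - (k + 1) - 1 = n - k - 2 by omega]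
  have h2 : Cw s (n - 1 - k) n = (Wp s (n - k - 2)).reverse ++ s (-1) :: s 0 :: Wp s k := by
    have h := Cw_middle hmir (n - 1 - k) n (by omega) (by omega)
    rw [h, show (n - 1 - k) - 1 = n - k - 2 by omega, show n - (n - 1 - k) - 1 = k by omega]
  have hf1 : IsFactor s (Cw s (k + 1) n) := isFactor_win _ _ _
  have h2r : IsFactor s ((Wp s k).reverse ++ s 0 :: s (-1) :: Wp s (n - k - 2)) := by
    have hf := reverse_isFactor hs hne hmir _ (isFactor_win s (-((n - 1 - k : ℕ) : ℤ)) n)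
    rw [show win s (-((n - 1 - k : ℕ) : ℤ)) n = Cw s (n - 1 - k) n from rfl, h2] at hf
    have e : ((Wp s (n - k - 2)).reverse ++ s (-1) :: s 0 :: Wp s k).reverse
        = (Wp s k).reverse ++ s 0 :: s (-1) :: Wp s (n - k - 2) := by
      simp
    rw [e] at hf
    exact hf
  cases hs0 : s 0 with
  | true =>
    have hm1 : s (-1) = false := by
      cases hv : s (-1)
      · rfl
      · rw [hv, hs0] at hne; exact absurd rfl hne
    rw [h1, hs0, hm1] at hf1
    rw [hs0, hm1] at h2r
    exact ⟨hf1, h2r⟩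
  | false =>
    have hm1 : s (-1) = true := by
      cases hv : s (-1)
      · rw [hv, hs0] at hne; exact absurd rfl hne
      · rfl
    rw [h1, hs0, hm1] at hf1
    rw [hs0, hm1] at h2r
    exact ⟨h2r, hf1⟩

end OFB

open OFB in
theorem ordered_factors_of_balanced
    (s : ℤ → Bool) (hs : IsBalanced s) (hfac : HasCentralFactorization s)
    (n : ℕ) (hn : 1 ≤ n)
    (w : List Bool) (hw : w = (List.range (n - 1)).map fun i => s (1 + i)) :
    ∃ u : Fin (n + 1) → List Bool,
      -- the `u i` are factors of `s` of length `n`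
      (∀ i, (u i).length = n ∧ IsFactor s (u i)) ∧
      -- every factor of `s` of length `n` is one of the `u i`
      (∀ v : List Bool, v.length = n → IsFactor s v → ∃ i, v = u i) ∧
      -- the `u i` are listed in (strictly) increasing lexicographic order,
      -- hence there are exactly `n + 1` distinct factors of length `n`
      (∀ i j : Fin (n + 1), i < j → List.Lex (· < ·) (u i) (u j)) ∧
      -- (i)
      u 0 = false :: w ∧ u (Fin.last n) = true :: w ∧
      -- (ii) and (iii)
      (∃ i : Fin n,
        (u i.castSucc = w.reverse ++ [false] ∧ u i.succ = w.reverse ++ [true]) ∧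
        ∀ j : Fin n, j ≠ i → ∃ x y : List Bool, x <+: w ∧ y <+: w ∧
          u j.castSucc = x.reverse ++ [false, true] ++ y ∧
          u j.succ = x.reverse ++ [true, false] ++ y) := by
  obtain ⟨hne, hmir⟩ := hfac
  have hw' : w = Wp s (n - 1) := by
    rw [hw, Wp]
    exact repr_eq s 1 (n - 1)
  classical
  set Fset : Finset (List Bool) := (Finset.range (n + 1)).image (fun j => Cw s j n)
    with hFset
  have hinj : Set.InjOn (fun j => Cw s j n) (Finset.range (n + 1)) := by
    intro i hi j hj hij
    by_contra hne2
    simp only [Finset.coe_range, Set.mem_Iio] at hi hj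
    rcases Nat.lt_or_ge i j with h | h
    · exact Cw_ne hne hmir n i j h (by omega) hij
    · exact Cw_ne hne hmir n j i (by omega) (by omega) hij.symm
  have hcard : Fset.card = n + 1 := by
    rw [hFset, Finset.card_image_of_injOn hinj, Finset.card_range]
  have hmem : ∀ v : List Bool, v ∈ Fset ↔ (v.length = n ∧ IsFactor s v) := by
    intro v
    constructor
    · intro hv
      simp only [hFset, Finset.mem_image, Finset.mem_range] at hv
      obtain ⟨j, hj, rfl⟩ := hv
      exact ⟨win_length s _ n, isFactor_win s _ n⟩
    · rintro ⟨hlen, hf⟩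
      obtain ⟨j, hj, rfl⟩ := factor_eq_Cw hs hne hmir n v hlen hf
      simp only [hFset, Finset.mem_image, Finset.mem_range]
      exact ⟨j, by omega, rfl⟩
  set iso := Fset.orderIsoOfFin hcard with hiso
  set u : Fin (n + 1) → List Bool := fun i => (iso i : List Bool) with hu
  have humem : ∀ i, u i ∈ Fset := fun i => (iso i).2
  have hufact : ∀ i, (u i).length = n ∧ IsFactor s (u i) := fun i => (hmem _).mp (humem i)
  have hsurj : ∀ v : List Bool, v ∈ Fset → ∃ i, v = u i := by
    intro v hv
    obtain ⟨i, hi⟩ := iso.surjective ⟨v, hv⟩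
    exact ⟨i, by rw [hu]; simp only [hi]⟩
  have hmono : ∀ i j : Fin (n + 1), i < j → List.Lex (· < ·) (u i) (u j) := by
    intro i j hij
    have h1 : iso i < iso j := iso.lt_iff_lt.mpr hij
    exact Subtype.coe_lt_coe.mpr h1
  have hreflect : ∀ i j : Fin (n + 1), List.Lex (· < ·) (u i) (u j) → i < j := by
    intro i j h
    exact iso.lt_iff_lt.mp (Subtype.coe_lt_coe.mp h)
  have huinj : ∀ i j : Fin (n + 1), u i = u j → i = j := by
    intro i j h
    exact iso.injective (Subtype.ext h)
  have hstep : ∀ (j : Fin n) (f : List Bool), f ∈ Fset →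
      List.Lex (· < ·) (u j.castSucc) f → f = u j.succ ∨ List.Lex (· < ·) (u j.succ) f := by
    intro j f hf hlt
    obtain ⟨t, rfl⟩ := hsurj f hf
    have h1 : j.castSucc < t := hreflect _ _ hlt
    have h2 : j.succ ≤ t := by
      rw [Fin.le_def]
      rw [Fin.lt_def] at h1
      simp only [Fin.coe_castSucc, Fin.val_succ] at h1 ⊢
      omega
    rcases eq_or_lt_of_le h2 with h3 | h3
    · left; rw [h3]
    · right; exact hmono _ _ h3
  -- the minimum and maximum
  have hlen_min : (false :: Wp s (n - 1)).length = n := by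
    simp only [List.length_cons, Wp_length]
    omega
  have hmin_mem : (false :: Wp s (n - 1)) ∈ Fset :=
    (hmem _).mpr ⟨hlen_min, w_ext hs hne hmir _ false⟩
  have hmax_mem : (true :: Wp s (n - 1)) ∈ Fset :=
    (hmem _).mpr ⟨by simpa using hlen_min, w_ext hs hne hmir _ true⟩
  have hu0 : u 0 = false :: Wp s (n - 1) := by
    obtain ⟨i₀, hi₀⟩ := hsurj _ hmin_mem
    by_cases h : i₀ = 0
    · rw [← h, ← hi₀]
    · exfalso
      have hpos : (0 : Fin (n + 1)) < i₀ := by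
        rcases Fin.pos_iff_ne_zero.mpr h with h'
        exact h'
      have := hmono 0 i₀ hpos
      rw [← hi₀] at this
      exact not_lt_min hs hne hmir (n - 1) (u 0)
        (by rw [(hufact 0).1]; omega) (hufact 0).2 this
  have hulast : u (Fin.last n) = true :: Wp s (n - 1) := by
    obtain ⟨i₁, hi₁⟩ := hsurj _ hmax_mem
    by_cases h : i₁ = Fin.last n
    · rw [← h, ← hi₁]
    · exfalso
      have hlt : i₁ < Fin.last n := lt_of_le_of_ne (Fin.le_last i₁) h
      have := hmono i₁ (Fin.last n) hlt
      rw [← hi₁] at this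
      exact not_max_lt hs hne hmir (n - 1) (u (Fin.last n))
        (by rw [(hufact (Fin.last n)).1]; omega) (hufact (Fin.last n)).2 this
  -- general pair analysis
  have pair : ∀ j : Fin n,
      u j.castSucc = (Wp s (n - 1)).reverse ++ [false] ∨
      ∃ k : ℕ, k + 2 ≤ n ∧
        u j.castSucc = (Wp s k).reverse ++ false :: true :: Wp s (n - k - 2) ∧
        u j.succ = (Wp s k).reverse ++ true :: false :: Wp s (n - k - 2) := by
    intro j
    have hUf := hufact j.castSucc
    have hVf := hufact j.succ
    have hUV : List.Lex (· < ·) (u j.castSucc) (u j.succ) :=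
      hmono _ _ (Fin.castSucc_lt_succ : j.castSucc < j.succ)
    have hne2 : u j.castSucc ≠ u j.succ := by
      intro h
      rw [h] at hUV
      exact lt_irrefl (α := List Bool) _ hUV
    obtain ⟨z, U', V', a, h1, h2, h3⟩ := first_diff _ _ (by rw [hUf.1, hVf.1]) hne2
    have hUV' := hUV
    rw [h1, h2] at hUV'
    obtain ⟨ha, -⟩ := lex_first z (a := a) (b := !a) (by cases a <;> simp) hUV'
    subst ha
    rw [show (!false) = true from rfl] at h2
    have hz0 : IsFactor s (z ++ [false]) :=
      isFactor_of_prefix hUf.2 ⟨U', by rw [h1]; simp⟩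
    have hz1 : IsFactor s (z ++ [true]) :=
      isFactor_of_prefix hVf.2 ⟨V', by rw [h2]; simp⟩
    have hzW : z = (Wp s z.length).reverse := rs_eq_revW hs hne hmir hz0 hz1
    have hkn : z.length + 1 ≤ n := by
      have hl := congrArg List.length h1
      rw [hUf.1] at hl
      simp at hl
      omega
    rcases Nat.eq_or_lt_of_le hkn with hk1 | hk2
    · left
      have hU'nil : U' = [] := by
        have hl := congrArg List.length h1
        rw [hUf.1] at hl
        simp at hl
        rw [← List.length_eq_zero_iff]
        omega
      rw [h1, hU'nil, hzW, show z.length = n - 1 by omega]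
    · right
      refine ⟨z.length, by omega, ?_⟩
      have hU'len : U'.length = (n - z.length - 2) + 1 := by
        have hl := congrArg List.length h1
        rw [hUf.1] at hl
        simp at hl
        omega
      have hU'f : IsFactor s U' := isFactor_of_suffix hUf.2 ⟨z ++ [false], by rw [h1]; simp⟩
      have hV'f : IsFactor s V' := isFactor_of_suffix hVf.2 ⟨z ++ [true], by rw [h2]; simp⟩
      have hUb := not_max_lt hs hne hmir (n - z.length - 2) U' hU'len hU'f
      have hVb := not_lt_min hs hne hmir (n - z.length - 2) V' (by omega) hV'f
      obtain ⟨hMfac, hNfac⟩ := both_middle hs hne hmir z.length n (by omega)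
      have hMlen : ((Wp s z.length).reverse ++ false :: true :: Wp s (n - z.length - 2)).length
          = n := by
        simp [Wp_length]
        omega
      have hNlen : ((Wp s z.length).reverse ++ true :: false :: Wp s (n - z.length - 2)).length
          = n := by
        simp [Wp_length]
        omega
      have hMmem := (hmem _).mpr ⟨hMlen, hMfac⟩
      have hNmem := (hmem _).mpr ⟨hNlen, hNfac⟩
      have hMz : (Wp s z.length).reverse ++ false :: true :: Wp s (n - z.length - 2)
          = z ++ false :: (true :: Wp s (n - z.length - 2)) := by rw [← hzW]
      have hNz : (Wp s z.length).reverse ++ true :: false :: Wp s (n - z.length - 2)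
          = z ++ true :: (false :: Wp s (n - z.length - 2)) := by rw [← hzW]
      -- U = M
      have hMltV : List.Lex (· < ·)
          ((Wp s z.length).reverse ++ false :: true :: Wp s (n - z.length - 2)) (u j.succ) := by
        rw [hMz, h2]
        exact lex_append_cons z _ _
      have hUeqM : u j.castSucc
          = (Wp s z.length).reverse ++ false :: true :: Wp s (n - z.length - 2) := by
        have hULE : u j.castSucc
            = (Wp s z.length).reverse ++ false :: true :: Wp s (n - z.length - 2) ∨
            List.Lex (· < ·) (u j.castSucc)
              ((Wp s z.length).reverse ++ false :: true :: Wp s (n - z.length - 2)) := by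
          rcases lt_trichotomy (α := List Bool) U' (true :: Wp s (n - z.length - 2))
            with hc | hc | hc
          · right
            rw [hMz, h1]
            exact lex_mono_append z (List.Lex.cons hc)
          · left
            rw [hMz, h1, hc]
          · exact absurd hc hUb
        rcases hULE with h | h
        · exact h
        · exfalso
          rcases hstep j _ hMmem h with h4 | h4
          · rw [h4] at hMltV
            exact lt_irrefl (α := List Bool) _ hMltV
          · exact absurd h4 (lt_asymm (α := List Bool) hMltV)
      refine ⟨hUeqM, ?_⟩
      -- V = N
      have hUltN : List.Lex (· < ·) (u j.castSucc)
          ((Wp s z.length).reverse ++ true :: false :: Wp s (n - z.length - 2)) := by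
        rw [hUeqM, hMz, hNz]
        exact lex_append_cons z _ _
      have hVLE : u j.succ
          = (Wp s z.length).reverse ++ true :: false :: Wp s (n - z.length - 2) ∨
          List.Lex (· < ·)
            ((Wp s z.length).reverse ++ true :: false :: Wp s (n - z.length - 2)) (u j.succ) := by
        rcases lt_trichotomy (α := List Bool) V' (false :: Wp s (n - z.length - 2))
          with hc | hc | hc
        · exact absurd hc hVb
        · left
          rw [hNz, h2, hc]
        · right
          rw [hNz, h2]
          exact lex_mono_append z (List.Lex.cons hc)
      rcases hVLE with h | h
      · exact h
      · exfalso
        rcases hstep j _ hNmem hUltN with h4 | h4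
        · rw [← h4] at h
          exact lt_irrefl (α := List Bool) _ h
        · exact absurd h (lt_asymm (α := List Bool) h4)
  -- locate the special pair
  have hSLmem : ((Wp s (n - 1)).reverse ++ [false]) ∈ Fset :=
    (hmem _).mpr ⟨by simp [Wp_length]; omega, rev_w_ext hs hne hmir _ false⟩
  have hSRmem : ((Wp s (n - 1)).reverse ++ [true]) ∈ Fset :=
    (hmem _).mpr ⟨by simp [Wp_length]; omega, rev_w_ext hs hne hmir _ true⟩
  obtain ⟨t, ht⟩ := hsurj _ hSLmem
  obtain ⟨t', ht'⟩ := hsurj _ hSRmem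
  have htt' : t < t' := hreflect _ _ (by rw [← ht, ← ht']; exact lex_append_cons _ [] [])
  have htlast : t ≠ Fin.last n := by
    intro h
    rw [h] at htt'
    exact absurd (Fin.le_last t') (not_le.mpr htt')
  set i : Fin n := t.castPred htlast with hidef
  have hicast : i.castSucc = t := Fin.castSucc_castPred t htlast
  have hui : u i.castSucc = (Wp s (n - 1)).reverse ++ [false] := by rw [hicast, ← ht]
  have hisucc_le : i.succ ≤ t' := by
    rw [Fin.le_def]
    rw [Fin.lt_def] at htt'
    have hv1 : (i.succ : Fin (n + 1)).val = t.val + 1 := by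
      simp [hidef, Fin.val_succ]
    omega
  have hspecial : u i.succ = (Wp s (n - 1)).reverse ++ [true] := by
    have hUlt : List.Lex (· < ·) (u i.castSucc) (u i.succ) :=
      hmono _ _ (Fin.castSucc_lt_succ : i.castSucc < i.succ)
    rcases eq_or_lt_of_le hisucc_le with h | h
    · rw [h, ← ht']
    · exfalso
      have hlt2 : List.Lex (· < ·) (u i.succ) ((Wp s (n - 1)).reverse ++ [true]) := by
        rw [ht']
        exact hmono _ _ h
      have hlt1 : List.Lex (· < ·) ((Wp s (n - 1)).reverse ++ [false]) (u i.succ) := by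
        rw [← hui]
        exact hUlt
      have hff := hufact i.succ
      have hne3 : u i.succ ≠ (Wp s (n - 1)).reverse ++ [true] := by
        intro h4
        rw [h4] at hlt2
        exact lt_irrefl (α := List Bool) _ hlt2
      obtain ⟨p, f', g', a, hf1, hf2, hf3⟩ := first_diff (u i.succ) _
        (by rw [hff.1]; simp [Wp_length]; omega) hne3
      have hlt2' := hlt2
      rw [hf1, hf2] at hlt2'
      obtain ⟨ha, -⟩ := lex_first p (a := a) (b := !a) (by cases a <;> simp) hlt2'
      subst ha
      rw [show (!false) = true from rfl] at hf2
      have hplen : p.length ≤ n - 1 := by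
        have hl := congrArg List.length hf2
        simp [Wp_length] at hl
        omega
      rcases Nat.eq_or_lt_of_le hplen with hp1 | hp2
      · -- p is the whole reversed prefix: u i.succ = SL, contradiction
        have h5 : ((Wp s (n - 1)).reverse ++ [true]).take (n - 1) = (Wp s (n - 1)).reverse :=
          List.take_left' (by simp [Wp_length])
        have h6 : (p ++ true :: g').take (n - 1) = p := List.take_left' hp1
        rw [hf2, h6] at h5
        have hg' : g' = [] := by
          have hl := congrArg List.length hf2
          simp [Wp_length] at hl
          rw [← List.length_eq_zero_iff]
          omega
        have hf'nil : f' = [] := by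
          rw [← List.length_eq_zero_iff]
          rw [hg'] at hf3
          simpa using hf3
        rw [hf1, hf'nil, h5] at hlt1
        exact lt_irrefl (α := List Bool) _ hlt1
      · -- p is a proper prefix : u i.succ < SL, contradiction
        have h6 : (p ++ true :: g').take p.length = p := List.take_left' rfl
        have h5 : ((Wp s (n - 1)).reverse ++ [true]).take p.length
            = (Wp s (n - 1)).reverse.take p.length :=
          List.take_append_of_le_length (by simp [Wp_length]; omega)
        have hptake : (Wp s (n - 1)).reverse.take p.length = p := by
          rw [← h5, hf2, h6]
        have hdrop : (Wp s (n - 1)).reverse.drop p.length ++ [true] = true :: g' := by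
          have h7 : ((Wp s (n - 1)).reverse ++ [true]).drop p.length
              = (Wp s (n - 1)).reverse.drop p.length ++ [true] :=
            List.drop_append_of_le_length (by simp [Wp_length]; omega)
          have h8 : (p ++ true :: g').drop p.length = true :: g' := List.drop_left' rfl
          rw [← h7, hf2, h8]
        rcases hdd : (Wp s (n - 1)).reverse.drop p.length with _ | ⟨c, tail⟩
        · have hl := congrArg List.length hdd
          simp [Wp_length] at hl
          omega
        · rw [hdd] at hdrop
          have hc : c = true := by
            have := congrArg (fun l => l.head?) hdrop
            simpa using this
          have htail : (Wp s (n - 1)).reverse = p ++ true :: tail := by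
            rw [← hptake, ← hc, ← hdd]
            exact (List.take_append_drop p.length _).symm
          have hcontra : List.Lex (· < ·) (u i.succ) ((Wp s (n - 1)).reverse ++ [false]) := by
            rw [hf1, htail]
            have e : (p ++ true :: tail) ++ [false] = p ++ true :: (tail ++ [false]) := by
              simp
            rw [e]
            exact lex_append_cons p f' (tail ++ [false])
          exact absurd hcontra (lt_asymm (α := List Bool) hlt1)
  -- final assembly
  refine ⟨u, hufact, ?_, hmono, ?_, ?_, ⟨i, ⟨?_, ?_⟩, ?_⟩⟩
  · intro v hlv hfv
    exact hsurj v ((hmem v).mpr ⟨hlv, hfv⟩)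
  · rw [hw']
    exact hu0
  · rw [hw']
    exact hulast
  · rw [hw']
    exact hui
  · rw [hw']
    exact hspecial
  · intro j hj
    rcases pair j with h | ⟨k, hk2, hM, hN⟩
    · exfalso
      apply hj
      have : u j.castSucc = u i.castSucc := by rw [h, hui]
      have h2 := huinj _ _ this
      exact Fin.castSucc_inj.mp h2
    · refine ⟨Wp s k, Wp s (n - k - 2), ?_, ?_, ?_, ?_⟩
      · rw [hw']
        exact Wp_prefix _ _ (by omega)
      · rw [hw']
        exact Wp_prefix _ _ (by omega)
      · rw [hM]
        simp
      · rw [hN]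
        simp
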